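/- arXiv:2410.01740 — 2 statements merged into one kernel-verified Lean document; each statement's English description precedes it below -/
import Mathlib

section
/- For every generalized state divergence 𝔻, every quantum channel N from system A' to system A, every completely positive map M from A' to A, and every quantum superchannel Θ from (A',A) to (C',C) — i.e., a transformation of the form Θ(L) = P^post_{AE→C} ∘ (L ⊗ id_E) ∘ P^pre_{C'→A'E} for some quantum channels P^pre_{C'→A'E} and P^post_{AE→C} and finite-dimensional memory system E — the generalized channel function is monotone under the action of Θ: 𝔻[N‖M] ≥ 𝔻[Θ(N)‖Θ(M)]. -/
namespace QIT

open Matrix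
open scoped Kronecker ComplexOrder

noncomputable section

/-- Square matrices over `ℂ` indexed by `ι`, the operators on the Hilbert space `ℂ^ι`. -/
abbrev Mat (ι : Type) : Type := Matrix ι ι ℂ

/-- Linear maps between matrix spaces. -/
abbrev MatMap (ι κ : Type) : Type := Mat ι →ₗ[ℂ] Mat κ

/-- The tensor product `L₁ ⊗ L₂` of two linear maps on matrix spaces, defined entrywise
via matrix units. -/
def tensorMap {ι₁ κ₁ ι₂ κ₂ : Type} [Fintype ι₁] [DecidableEq ι₁] [Fintype ι₂] [DecidableEq ι₂]
    (L₁ : MatMap ι₁ κ₁) (L₂ : MatMap ι₂ κ₂) : MatMap (ι₁ × ι₂) (κ₁ × κ₂) where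
  toFun X := Matrix.of fun p q => ∑ k₁, ∑ l₁, ∑ k₂, ∑ l₂,
      X (k₁, k₂) (l₁, l₂) * L₁ (Matrix.single k₁ l₁ 1) p.1 q.1
        * L₂ (Matrix.single k₂ l₂ 1) p.2 q.2
  map_add' X Y := by
    ext p q
    simp [Matrix.add_apply, add_mul, Finset.sum_add_distrib]
  map_smul' c X := by
    ext p q
    simp [Matrix.smul_apply, smul_eq_mul, Finset.mul_sum, mul_assoc]

/-- A quantum state: positive semidefinite with unit trace. -/
def IsState {ι : Type} [Fintype ι] (ρ : Mat ι) : Prop :=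
  ρ.PosSemidef ∧ ρ.trace = 1

/-- Trace preserving linear map. -/
def TracePreserving {ι κ : Type} [Fintype ι] [Fintype κ] (L : MatMap ι κ) : Prop :=
  ∀ X, (L X).trace = X.trace

/-- Complete positivity: `id_R ⊗ L` preserves positive semidefiniteness for every
finite-dimensional reference system `R`. -/
def IsCP {ι κ : Type} [Fintype ι] [DecidableEq ι] [Fintype κ] (L : MatMap ι κ) : Prop :=
  ∀ (r : ℕ) (X : Mat (Fin r × ι)), X.PosSemidef →
    (tensorMap (LinearMap.id : MatMap (Fin r) (Fin r)) L X).PosSemidef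

/-- A quantum channel: completely positive and trace preserving. -/
def IsChannel {ι κ : Type} [Fintype ι] [DecidableEq ι] [Fintype κ] (L : MatMap ι κ) : Prop :=
  IsCP L ∧ TracePreserving L

/-- The completely mixing (depolarizing) map `X ↦ tr(X) · 1`. -/
def Rmap (ι κ : Type) [Fintype ι] [DecidableEq κ] : MatMap ι κ where
  toFun X := X.trace • (1 : Mat κ)
  map_add' X Y := by simp [Matrix.trace_add, add_smul]
  map_smul' c X := by simp [Matrix.trace_smul, mul_smul]

/-- A generalized state divergence: a function of a pair (state, positive semidefinite
operator) on a common finite-dimensional system, satisfying the data-processing inequality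
under all quantum channels. -/
structure StateDivergence : Type 1 where
  D : ∀ {ι : Type} [Fintype ι] [DecidableEq ι], Mat ι → Mat ι → EReal
  dpi : ∀ {ι κ : Type} [Fintype ι] [DecidableEq ι] [Fintype κ] [DecidableEq κ]
      (L : MatMap ι κ), IsChannel L → ∀ ρ σ : Mat ι, IsState ρ → σ.PosSemidef →
      D (L ρ) (L σ) ≤ D ρ σ

/-- The generalized channel function `𝔻[N‖M]`: supremum over all finite-dimensional
reference systems `R = Fin r` and all input states of the state divergence of the outputs. -/
def chDiv (𝔻 : StateDivergence) {ι κ : Type} [Fintype ι] [DecidableEq ι]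
    [Fintype κ] [DecidableEq κ] (N M : MatMap ι κ) : EReal :=
  ⨆ (r : ℕ) (ρ : {ρ : Mat (Fin r × ι) // IsState ρ}),
    𝔻.D (tensorMap (LinearMap.id : MatMap (Fin r) (Fin r)) N ρ.1)
        (tensorMap (LinearMap.id : MatMap (Fin r) (Fin r)) M ρ.1)

lemma map_apply_eq_sum {ι κ : Type} [Fintype ι] [DecidableEq ι] (L : MatMap ι κ)
    (Y : Mat ι) (p q : κ) :
    L Y p q = ∑ k, ∑ l, Y k l * L (Matrix.single k l 1) p q := by
  conv_lhs => rw [Matrix.matrix_eq_sum_single Y]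
  simp only [map_sum, Matrix.sum_apply]
  refine Finset.sum_congr rfl fun k _ => Finset.sum_congr rfl fun l _ => ?_
  have : Matrix.single k l (Y k l) = Y k l • Matrix.single k l (1:ℂ) := by
    rw [Matrix.smul_single, smul_eq_mul, mul_one]
  rw [this, _root_.map_smul, Matrix.smul_apply, smul_eq_mul]

/-- the "block" of a bipartite matrix -/
def blk {ι₁ ι₂ : Type} (X : Mat (ι₁ × ι₂)) (p q : ι₁) : Mat ι₂ :=
  Matrix.of fun x y => X (p, x) (q, y)

lemma tensorMap_id_apply {ι₁ ι₂ κ₂ : Type} [Fintype ι₁] [DecidableEq ι₁]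
    [Fintype ι₂] [DecidableEq ι₂] (L : MatMap ι₂ κ₂) (X : Mat (ι₁ × ι₂))
    (p₁ q₁ : ι₁) (p₂ q₂ : κ₂) :
    tensorMap (LinearMap.id : MatMap ι₁ ι₁) L X (p₁, p₂) (q₁, q₂)
      = L (blk X p₁ q₁) p₂ q₂ := by
  rw [map_apply_eq_sum L (blk X p₁ q₁)]
  show (∑ k₁, ∑ l₁, ∑ k₂, ∑ l₂,
      X (k₁, k₂) (l₁, l₂) * (Matrix.single k₁ l₁ (1:ℂ)) p₁ q₁
        * L (Matrix.single k₂ l₂ 1) p₂ q₂) = _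
  rw [Finset.sum_eq_single p₁]
  · rw [Finset.sum_eq_single q₁]
    · simp [Matrix.single, blk]
    · intro l₁ _ hl₁
      simp [Matrix.single, hl₁]
    · simp
  · intro k₁ _ hk₁
    simp [Matrix.single, hk₁]
  · simp

lemma tensorMap_id_right_apply {ι₁ κ₁ ι₂ : Type} [Fintype ι₁] [DecidableEq ι₁]
    [Fintype ι₂] [DecidableEq ι₂] (L : MatMap ι₁ κ₁) (X : Mat (ι₁ × ι₂))
    (p₁ q₁ : κ₁) (p₂ q₂ : ι₂) :
    tensorMap L (LinearMap.id : MatMap ι₂ ι₂) X (p₁, p₂) (q₁, q₂)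
      = L (Matrix.of fun x y => X (x, p₂) (y, q₂)) p₁ q₁ := by
  rw [map_apply_eq_sum L]
  show (∑ k₁, ∑ l₁, ∑ k₂, ∑ l₂,
      X (k₁, k₂) (l₁, l₂) * L (Matrix.single k₁ l₁ 1) p₁ q₁
        * (Matrix.single k₂ l₂ (1:ℂ)) p₂ q₂)
    = ∑ k₁, ∑ l₁, (Matrix.of fun x y => X (x, p₂) (y, q₂)) k₁ l₁
        * L (Matrix.single k₁ l₁ 1) p₁ q₁
  refine Finset.sum_congr rfl fun k₁ _ => Finset.sum_congr rfl fun l₁ _ => ?_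
  rw [Finset.sum_eq_single p₂]
  · rw [Finset.sum_eq_single q₂]
    · simp [Matrix.single]
    · intro l₂ _ hl₂
      simp [Matrix.single, hl₂]
    · simp
  · intro k₂ _ hk₂
    simp [Matrix.single, hk₂]
  · simp

lemma blk_tensorMap_id {ι₁ ι₂ κ₂ : Type} [Fintype ι₁] [DecidableEq ι₁]
    [Fintype ι₂] [DecidableEq ι₂] (L : MatMap ι₂ κ₂) (X : Mat (ι₁ × ι₂)) (p q : ι₁) :
    blk (tensorMap (LinearMap.id : MatMap ι₁ ι₁) L X) p q = L (blk X p q) := by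
  ext x y
  exact tensorMap_id_apply L X p q x y

/-- trace of tensorMap id L -/
lemma trace_tensorMap_id {ι₁ ι₂ κ₂ : Type} [Fintype ι₁] [DecidableEq ι₁]
    [Fintype ι₂] [DecidableEq ι₂] [Fintype κ₂] (L : MatMap ι₂ κ₂) (hL : TracePreserving L)
    (X : Mat (ι₁ × ι₂)) :
    (tensorMap (LinearMap.id : MatMap ι₁ ι₁) L X).trace = X.trace := by
  simp only [Matrix.trace, Matrix.diag, Fintype.sum_prod_type]
  refine Finset.sum_congr rfl fun p _ => ?_
  calc ∑ x, tensorMap (LinearMap.id : MatMap ι₁ ι₁) L X (p, x) (p, x)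
      = ∑ x, L (blk X p p) x x := by
        exact Finset.sum_congr rfl fun x _ => tensorMap_id_apply L X p p x x
    _ = (L (blk X p p)).trace := rfl
    _ = (blk X p p).trace := hL _
    _ = ∑ x, X (p, x) (p, x) := rfl

/-- composition under tensorMap id -/
lemma tensorMap_id_comp {ι₁ ι₂ κ₂ μ₂ : Type} [Fintype ι₁] [DecidableEq ι₁]
    [Fintype ι₂] [DecidableEq ι₂] [Fintype κ₂] [DecidableEq κ₂]
    (L₁ : MatMap ι₂ κ₂) (L₂ : MatMap κ₂ μ₂) (X : Mat (ι₁ × ι₂)) :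
    tensorMap (LinearMap.id : MatMap ι₁ ι₁) (L₂ ∘ₗ L₁) X
      = tensorMap (LinearMap.id : MatMap ι₁ ι₁) L₂
          (tensorMap (LinearMap.id : MatMap ι₁ ι₁) L₁ X) := by
  ext ⟨p₁, p₂⟩ ⟨q₁, q₂⟩
  rw [tensorMap_id_apply, tensorMap_id_apply, blk_tensorMap_id]
  rfl

lemma IsCP.comp {ι κ μ : Type} [Fintype ι] [DecidableEq ι] [Fintype κ] [DecidableEq κ]
    [Fintype μ] {L₁ : MatMap ι κ} {L₂ : MatMap κ μ} (h₁ : IsCP L₁) (h₂ : IsCP L₂) :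
    IsCP (L₂ ∘ₗ L₁) := by
  intro r X hX
  rw [tensorMap_id_comp]
  exact h₂ r _ (h₁ r X hX)

lemma IsChannel.comp {ι κ μ : Type} [Fintype ι] [DecidableEq ι] [Fintype κ] [DecidableEq κ]
    [Fintype μ] [DecidableEq μ] {L₁ : MatMap ι κ} {L₂ : MatMap κ μ}
    (h₁ : IsChannel L₁) (h₂ : IsChannel L₂) : IsChannel (L₂ ∘ₗ L₁) :=
  ⟨h₁.1.comp h₂.1, fun X => by
    simp only [LinearMap.comp_apply]
    rw [h₂.2, h₁.2]⟩

/-- relabeling map -/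
def reMap {ι κ : Type} (σ : ι ≃ κ) : MatMap ι κ where
  toFun X := X.submatrix σ.symm σ.symm
  map_add' X Y := rfl
  map_smul' c X := rfl

lemma reMap_apply {ι κ : Type} (σ : ι ≃ κ) (X : Mat ι) :
    reMap σ X = X.submatrix σ.symm σ.symm := rfl

lemma tensorMap_id_reMap {ι₁ ι₂ κ₂ : Type} [Fintype ι₁] [DecidableEq ι₁]
    [Fintype ι₂] [DecidableEq ι₂] (σ : ι₂ ≃ κ₂) (X : Mat (ι₁ × ι₂)) :
    tensorMap (LinearMap.id : MatMap ι₁ ι₁) (reMap σ) X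
      = X.submatrix (Prod.map id σ.symm) (Prod.map id σ.symm) := by
  ext ⟨p₁, p₂⟩ ⟨q₁, q₂⟩
  rw [tensorMap_id_apply]
  rfl

lemma reMap_isChannel {ι κ : Type} [Fintype ι] [DecidableEq ι] [Fintype κ] [DecidableEq κ]
    (σ : ι ≃ κ) : IsChannel (reMap σ) := by
  constructor
  · intro r X hX
    rw [tensorMap_id_reMap]
    exact hX.submatrix _
  · intro X
    simp only [reMap_apply, Matrix.trace, Matrix.diag]
    exact Fintype.sum_equiv σ.symm _ _ fun x => rfl

lemma trace_submatrix_equiv {ι κ : Type} [Fintype ι] [Fintype κ] (σ : κ ≃ ι) (X : Mat ι) :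
    (X.submatrix σ σ).trace = X.trace := by
  simp only [Matrix.trace, Matrix.diag]
  exact Fintype.sum_equiv σ _ _ fun x => rfl

/-- the equivalence combining reference `Fin r` and memory `Fin e` into `Fin (r*e)`. -/
def combEquiv (r e : ℕ) (ι : Type) : (Fin r × (ι × Fin e)) ≃ (Fin (r * e) × ι) where
  toFun p := (finProdFinEquiv (p.1, p.2.2), p.2.1)
  invFun p := ((finProdFinEquiv.symm p.1).1, (p.2, (finProdFinEquiv.symm p.1).2))
  left_inv p := by
    obtain ⟨u, x, v⟩ := p
    simp only [Equiv.symm_apply_apply]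
  right_inv p := by
    obtain ⟨w, x⟩ := p
    show (finProdFinEquiv ((finProdFinEquiv.symm w).1, (finProdFinEquiv.symm w).2), x) = (w, x)
    rw [Prod.mk.eta, Equiv.apply_symm_apply]

/-- nested tensor with identities, as a single tensor after relabeling. -/
lemma nested_tensor {ι κ : Type} [Fintype ι] [DecidableEq ι]
    (s r : ℕ) (L : MatMap ι κ) (X : Mat (Fin s × (Fin r × ι))) :
    tensorMap (LinearMap.id : MatMap (Fin s) (Fin s))
      (tensorMap (LinearMap.id : MatMap (Fin r) (Fin r)) L) X
    = Matrix.submatrix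
        (tensorMap (LinearMap.id : MatMap (Fin (s * r)) (Fin (s * r))) L
          (X.submatrix
            (fun p : Fin (s * r) × ι => ((finProdFinEquiv.symm p.1).1, ((finProdFinEquiv.symm p.1).2, p.2)))
            (fun p : Fin (s * r) × ι => ((finProdFinEquiv.symm p.1).1, ((finProdFinEquiv.symm p.1).2, p.2)))))
        (fun p : Fin s × Fin r × κ => (finProdFinEquiv (p.1, p.2.1), p.2.2))
        (fun p : Fin s × Fin r × κ => (finProdFinEquiv (p.1, p.2.1), p.2.2)) := by
  ext ⟨p₁, p₂, p₃⟩ ⟨q₁, q₂, q₃⟩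
  rw [tensorMap_id_apply]
  show (tensorMap (LinearMap.id : MatMap (Fin r) (Fin r)) L) (blk X p₁ q₁) (p₂, p₃) (q₂, q₃) = _
  rw [tensorMap_id_apply]
  simp only [Matrix.submatrix_apply]
  rw [tensorMap_id_apply]
  have hb : blk (blk X p₁ q₁) p₂ q₂
      = blk (X.submatrix
          (fun p : Fin (s * r) × ι => ((finProdFinEquiv.symm p.1).1, ((finProdFinEquiv.symm p.1).2, p.2)))
          (fun p : Fin (s * r) × ι => ((finProdFinEquiv.symm p.1).1, ((finProdFinEquiv.symm p.1).2, p.2))))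
        (finProdFinEquiv (p₁, p₂)) (finProdFinEquiv (q₁, q₂)) := by
    ext x y
    show X (p₁, (p₂, x)) (q₁, (q₂, y))
        = X ((finProdFinEquiv.symm (finProdFinEquiv (p₁, p₂))).1,
            ((finProdFinEquiv.symm (finProdFinEquiv (p₁, p₂))).2, x))
          ((finProdFinEquiv.symm (finProdFinEquiv (q₁, q₂))).1,
            ((finProdFinEquiv.symm (finProdFinEquiv (q₁, q₂))).2, y))
    rw [Equiv.symm_apply_apply, Equiv.symm_apply_apply]
  rw [hb]

/-- the key reshuffling identity. -/
lemma tensor_reshuffle {ι κ : Type} [Fintype ι] [DecidableEq ι]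
    (r e : ℕ) (L : MatMap ι κ) (X : Mat (Fin r × (ι × Fin e))) :
    tensorMap (LinearMap.id : MatMap (Fin (r * e)) (Fin (r * e))) L
        (X.submatrix (combEquiv r e ι).symm (combEquiv r e ι).symm)
      = Matrix.submatrix
          (tensorMap (LinearMap.id : MatMap (Fin r) (Fin r))
            (tensorMap L (LinearMap.id : MatMap (Fin e) (Fin e))) X)
          (combEquiv r e κ).symm (combEquiv r e κ).symm := by
  ext ⟨w, p⟩ ⟨w', q⟩
  rw [tensorMap_id_apply]
  simp only [Matrix.submatrix_apply]
  show _ = tensorMap (LinearMap.id : MatMap (Fin r) (Fin r))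
      (tensorMap L (LinearMap.id : MatMap (Fin e) (Fin e))) X
      ((finProdFinEquiv.symm w).1, (p, (finProdFinEquiv.symm w).2))
      ((finProdFinEquiv.symm w').1, (q, (finProdFinEquiv.symm w').2))
  rw [tensorMap_id_apply, tensorMap_id_right_apply]
  have hb : blk (X.submatrix (combEquiv r e ι).symm (combEquiv r e ι).symm) w w'
      = Matrix.of fun x y =>
          blk X (finProdFinEquiv.symm w).1 (finProdFinEquiv.symm w').1
            (x, (finProdFinEquiv.symm w).2) (y, (finProdFinEquiv.symm w').2) := by
    ext x y
    simp [blk, combEquiv]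
  rw [hb]


lemma IsCP.tensor_id_left {ι κ : Type} [Fintype ι] [DecidableEq ι] [Fintype κ]
    (r : ℕ) {L : MatMap ι κ} (hL : IsCP L) :
    IsCP (tensorMap (LinearMap.id : MatMap (Fin r) (Fin r)) L) := by
  intro s X hX
  rw [nested_tensor]
  exact (hL (s * r) _ (hX.submatrix _)).submatrix _

lemma IsChannel.tensor_id_left {ι κ : Type} [Fintype ι] [DecidableEq ι] [Fintype κ]
    [DecidableEq κ] (r : ℕ) {L : MatMap ι κ} (hL : IsChannel L) :
    IsChannel (tensorMap (LinearMap.id : MatMap (Fin r) (Fin r)) L) :=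
  ⟨hL.1.tensor_id_left r, fun X => trace_tensorMap_id L hL.2 X⟩

set_option maxHeartbeats 1000000 in
/-- monotonicity of the generalized channel function under superchannels. -/
theorem stmt0 (𝔻 : StateDivergence) (a' a c' c e : ℕ)
    (N : MatMap (Fin a') (Fin a)) (hN : IsChannel N)
    (M : MatMap (Fin a') (Fin a)) (hM : IsCP M)
    (pre : MatMap (Fin c') (Fin a' × Fin e)) (hpre : IsChannel pre)
    (post : MatMap (Fin a × Fin e) (Fin c)) (hpost : IsChannel post) :
    chDiv 𝔻 (post ∘ₗ (tensorMap N (LinearMap.id : MatMap (Fin e) (Fin e))) ∘ₗ pre)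
             (post ∘ₗ (tensorMap M (LinearMap.id : MatMap (Fin e) (Fin e))) ∘ₗ pre)
      ≤ chDiv 𝔻 N M := by
  refine iSup_le fun r => iSup_le fun ρs => ?_
  obtain ⟨ρ, hρ⟩ := ρs
  set ρ₁ : Mat (Fin r × (Fin a' × Fin e)) :=
    tensorMap (LinearMap.id : MatMap (Fin r) (Fin r)) pre ρ with hρ₁def
  have hρ₁ : IsState ρ₁ :=
    ⟨hpre.1 r ρ hρ.1, by rw [hρ₁def, trace_tensorMap_id pre hpre.2, hρ.2]⟩
  set σa' := (combEquiv r e (Fin a')).symm with hσa'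
  set σa := (combEquiv r e (Fin a)).symm with hσa
  set ρ₂ : Mat (Fin (r * e) × Fin a') := ρ₁.submatrix σa' σa' with hρ₂def
  have hρ₂ : IsState ρ₂ :=
    ⟨hρ₁.1.submatrix _, by rw [hρ₂def, trace_submatrix_equiv σa' ρ₁, hρ₁.2]⟩
  have hKey : ∀ L : MatMap (Fin a') (Fin a),
      tensorMap (LinearMap.id : MatMap (Fin (r * e)) (Fin (r * e))) L ρ₂
        = Matrix.submatrix
            (tensorMap (LinearMap.id : MatMap (Fin r) (Fin r))
              (tensorMap L (LinearMap.id : MatMap (Fin e) (Fin e))) ρ₁) σa σa :=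
    fun L => tensor_reshuffle r e L ρ₁
  set K : MatMap (Fin (r * e) × Fin a) (Fin r × Fin c) :=
    (tensorMap (LinearMap.id : MatMap (Fin r) (Fin r)) post) ∘ₗ reMap σa with hKdef
  have hK : IsChannel K := (reMap_isChannel σa).comp (hpost.tensor_id_left r)
  have hcancel : ∀ Y : Mat (Fin r × (Fin a × Fin e)),
      reMap σa (Y.submatrix σa σa) = Y := by
    intro Y
    rw [reMap_apply, Matrix.submatrix_submatrix]
    have : (⇑σa ∘ ⇑σa.symm) = id := by
      funext x; exact σa.apply_symm_apply x
    rw [this, Matrix.submatrix_id_id]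
  have hKapp : ∀ L : MatMap (Fin a') (Fin a),
      K (tensorMap (LinearMap.id : MatMap (Fin (r * e)) (Fin (r * e))) L ρ₂)
        = tensorMap (LinearMap.id : MatMap (Fin r) (Fin r))
            (post ∘ₗ (tensorMap L (LinearMap.id : MatMap (Fin e) (Fin e))) ∘ₗ pre) ρ := by
    intro L
    rw [hKey L, hKdef, LinearMap.comp_apply, hcancel, tensorMap_id_comp,
      tensorMap_id_comp, ← hρ₁def]
  have hNstate : IsState
      (tensorMap (LinearMap.id : MatMap (Fin (r * e)) (Fin (r * e))) N ρ₂) :=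
    ⟨hN.1 (r * e) ρ₂ hρ₂.1, by rw [trace_tensorMap_id N hN.2, hρ₂.2]⟩
  have hMpsd : (tensorMap (LinearMap.id : MatMap (Fin (r * e)) (Fin (r * e))) M ρ₂).PosSemidef :=
    hM (r * e) ρ₂ hρ₂.1
  calc 𝔻.D (tensorMap (LinearMap.id : MatMap (Fin r) (Fin r))
          (post ∘ₗ (tensorMap N (LinearMap.id : MatMap (Fin e) (Fin e))) ∘ₗ pre) ρ)
        (tensorMap (LinearMap.id : MatMap (Fin r) (Fin r))
          (post ∘ₗ (tensorMap M (LinearMap.id : MatMap (Fin e) (Fin e))) ∘ₗ pre) ρ)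
      = 𝔻.D (K (tensorMap (LinearMap.id : MatMap (Fin (r * e)) (Fin (r * e))) N ρ₂))
            (K (tensorMap (LinearMap.id : MatMap (Fin (r * e)) (Fin (r * e))) M ρ₂)) := by
        rw [hKapp N, hKapp M]
    _ ≤ 𝔻.D (tensorMap (LinearMap.id : MatMap (Fin (r * e)) (Fin (r * e))) N ρ₂)
            (tensorMap (LinearMap.id : MatMap (Fin (r * e)) (Fin (r * e))) M ρ₂) :=
        𝔻.dpi K hK _ _ hNstate hMpsd
    _ ≤ chDiv 𝔻 N M :=
        le_iSup_of_le (r * e) (le_iSup_of_le ⟨ρ₂, hρ₂⟩ le_rfl)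


end
end QIT
end

section
/- Let 𝔻 be a generalized state divergence, let N_{A'B'→AB} be a bipartite quantum channel, let Θ̂ be a quantum superchannel from (A',A) to (C',C) that preserves the completely mixing map, i.e., Θ̂(R_{A'→A}) = R_{C'→C}, and let Θ be an arbitrary quantum superchannel from (B',B) to (D',D). Then the generalized conditional entropy is nondecreasing under their local action: 𝐒[A|B]_N ≤ 𝐒[C|D]_{(Θ̂⊗Θ)(N)}. -/
namespace QIT

open Matrix
open scoped Kronecker ComplexOrder

noncomputable section

/-- The unitary channel of relabeling induced by an equivalence of index types. -/
def reindexMap {ι κ : Type} (e : ι ≃ κ) : MatMap ι κ :=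
  (Matrix.reindexLinearEquiv ℂ ℂ e e).toLinearMap

/-- The generalized conditional entropy of a bipartite channel,
`𝐒[A|B]_N = −inf_M 𝔻[N ‖ R_{A'→A} ⊗ M_{B'→B}]`. -/
def condEnt (𝔻 : StateDivergence) {α' β' α β : Type}
    [Fintype α'] [DecidableEq α'] [Fintype β'] [DecidableEq β']
    [Fintype α] [DecidableEq α] [Fintype β] [DecidableEq β]
    (N : MatMap (α' × β') (α × β)) : EReal :=
  - ⨅ (M : {M : MatMap β' β // IsChannel M}),
      chDiv 𝔻 N (tensorMap (Rmap α' α) M.1)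


section Aux
open Matrix
variable {ι κ ι₁ κ₁ ι₂ κ₂ μ₁ μ₂ : Type}

lemma stdBasis_apply [DecidableEq ι] (k l s t : ι) :
    single k l (1:ℂ) s t = if k = s ∧ l = t then 1 else 0 := rfl

lemma map_expand [Fintype ι] [DecidableEq ι] (L : MatMap ι κ) (X : Mat ι) :
    L X = ∑ k, ∑ l, X k l • L (single k l 1) := by
  conv_lhs => rw [matrix_eq_sum_single X]
  rw [map_sum]
  refine Finset.sum_congr rfl fun k _ => ?_
  rw [map_sum]
  refine Finset.sum_congr rfl fun l _ => ?_
  rw [show single k l (X k l) = X k l • single k l (1:ℂ) by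
      rw [smul_single, smul_eq_mul, mul_one], L.map_smul]

lemma matmap_ext [Fintype ι] [DecidableEq ι] {L L' : MatMap ι κ}
    (h : ∀ k l, L (single k l 1) = L' (single k l 1)) : L = L' := by
  apply LinearMap.ext; intro X
  rw [map_expand L, map_expand L']
  simp only [h]

lemma stdBasisMatrix_prod [DecidableEq ι₁] [DecidableEq ι₂] (k₁ l₁ : ι₁) (k₂ l₂ : ι₂) :
    single (k₁,k₂) (l₁,l₂) (1:ℂ) =
      single k₁ l₁ (1:ℂ) ⊗ₖ single k₂ l₂ (1:ℂ) := by
  ext ⟨a,c⟩ ⟨b,d⟩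
  simp only [kroneckerMap_apply, stdBasis_apply, Prod.mk.injEq]
  split_ifs <;> simp_all

lemma tensorMap_apply [Fintype ι₁] [DecidableEq ι₁] [Fintype ι₂] [DecidableEq ι₂]
    (L₁ : MatMap ι₁ κ₁) (L₂ : MatMap ι₂ κ₂) (X : Mat (ι₁ × ι₂)) (p q : κ₁ × κ₂) :
    tensorMap L₁ L₂ X p q = ∑ k₁, ∑ l₁, ∑ k₂, ∑ l₂,
      X (k₁,k₂) (l₁,l₂) * L₁ (single k₁ l₁ 1) p.1 q.1
        * L₂ (single k₂ l₂ 1) p.2 q.2 := rfl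

lemma tensorMap_kron [Fintype ι₁] [DecidableEq ι₁] [Fintype ι₂] [DecidableEq ι₂]
    (L₁ : MatMap ι₁ κ₁) (L₂ : MatMap ι₂ κ₂) (A : Mat ι₁) (B : Mat ι₂) :
    tensorMap L₁ L₂ (A ⊗ₖ B) = (L₁ A) ⊗ₖ (L₂ B) := by
  ext ⟨p₁,p₂⟩ ⟨q₁,q₂⟩
  rw [kroneckerMap_apply, tensorMap_apply, map_expand L₁ A, map_expand L₂ B]
  simp only [Matrix.sum_apply, Matrix.smul_apply, smul_eq_mul, kroneckerMap_apply]
  simp only [Finset.sum_mul]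
  simp only [Finset.mul_sum]
  refine Finset.sum_congr rfl fun k₁ _ => Finset.sum_congr rfl fun l₁ _ =>
    Finset.sum_congr rfl fun k₂ _ => Finset.sum_congr rfl fun l₂ _ => by ring

end Aux
section Aux2
open Matrix
variable {ι κ ι₁ κ₁ ι₂ κ₂ μ₁ μ₂ : Type}

lemma tensorMap_comp [Fintype ι₁] [DecidableEq ι₁] [Fintype ι₂] [DecidableEq ι₂]
    [Fintype κ₁] [DecidableEq κ₁] [Fintype κ₂] [DecidableEq κ₂]
    (L₁ : MatMap κ₁ μ₁) (K₁ : MatMap ι₁ κ₁) (L₂ : MatMap κ₂ μ₂) (K₂ : MatMap ι₂ κ₂) :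
    tensorMap (L₁ ∘ₗ K₁) (L₂ ∘ₗ K₂) = tensorMap L₁ L₂ ∘ₗ tensorMap K₁ K₂ := by
  apply matmap_ext; rintro ⟨k₁,k₂⟩ ⟨l₁,l₂⟩
  simp only [LinearMap.comp_apply, stdBasisMatrix_prod, tensorMap_kron]

lemma tensorMap_id [Fintype ι₁] [DecidableEq ι₁] [Fintype ι₂] [DecidableEq ι₂] :
    tensorMap (LinearMap.id : MatMap ι₁ ι₁) (LinearMap.id : MatMap ι₂ ι₂)
      = LinearMap.id := by
  apply matmap_ext; rintro ⟨k₁,k₂⟩ ⟨l₁,l₂⟩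
  simp only [stdBasisMatrix_prod, tensorMap_kron, LinearMap.id_apply]

lemma reindexMap_apply {e : ι ≃ κ} (X : Mat ι) (p q : κ) :
    reindexMap e X p q = X (e.symm p) (e.symm q) := rfl

lemma reindexMap_refl : reindexMap (Equiv.refl ι) = LinearMap.id := by
  apply LinearMap.ext; intro X; ext p q; rfl

lemma reindexMap_comp {μ : Type} (f : κ ≃ μ) (g : ι ≃ κ) :
    reindexMap f ∘ₗ reindexMap g = reindexMap (g.trans f) := by
  apply LinearMap.ext; intro X; ext p q; rfl

lemma reindexMap_symm_apply (f : ι ≃ κ) (X : Mat ι) :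
    reindexMap f.symm (reindexMap f X) = X := by
  ext p q; simp [reindexMap_apply]

lemma reindexMap_stdBasis [DecidableEq ι] [DecidableEq κ] (f : ι ≃ κ) (k l : ι) :
    reindexMap f (single k l (1:ℂ)) = single (f k) (f l) 1 := by
  ext p q
  simp only [reindexMap_apply, stdBasis_apply]
  refine if_congr ?_ rfl rfl
  rw [Equiv.eq_symm_apply, Equiv.eq_symm_apply]

lemma tensorMap_reindex [Fintype ι₁] [DecidableEq ι₁] [Fintype ι₂] [DecidableEq ι₂]
    [DecidableEq κ₁] [DecidableEq κ₂] (f₁ : ι₁ ≃ κ₁) (f₂ : ι₂ ≃ κ₂) :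
    tensorMap (reindexMap f₁) (reindexMap f₂) = reindexMap (f₁.prodCongr f₂) := by
  apply matmap_ext; rintro ⟨k₁,k₂⟩ ⟨l₁,l₂⟩
  rw [stdBasisMatrix_prod, tensorMap_kron, reindexMap_stdBasis, reindexMap_stdBasis,
    ← stdBasisMatrix_prod (f₁ k₁) (f₁ l₁), ← stdBasisMatrix_prod k₁ l₁, reindexMap_stdBasis]
  rfl

lemma reindex_prodComm_kron (A : Mat ι₁) (B : Mat ι₂) :
    reindexMap (Equiv.prodComm ι₁ ι₂) (A ⊗ₖ B) = B ⊗ₖ A := by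
  ext ⟨p,q⟩ ⟨r,s⟩
  simp [reindexMap_apply, kroneckerMap_apply, mul_comm]

lemma reindex_pppc_kron {α β γ δ : Type} (A : Mat α) (B : Mat β) (C : Mat γ) (D : Mat δ) :
    reindexMap (Equiv.prodProdProdComm α β γ δ) ((A ⊗ₖ B) ⊗ₖ (C ⊗ₖ D))
      = (A ⊗ₖ C) ⊗ₖ (B ⊗ₖ D) := by
  ext ⟨⟨a,c⟩,⟨b,d⟩⟩ ⟨⟨a',c'⟩,⟨b',d'⟩⟩
  simp only [reindexMap_apply, kroneckerMap_apply, Equiv.prodProdProdComm, Equiv.coe_fn_symm_mk]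
  ring

/-- The equivalence `(s,(x,w)) ↦ (e (s,w), x)`. -/
def shuffle {R E R' u : Type} (e : R × E ≃ R') : R × (u × E) ≃ R' × u :=
  ((Equiv.refl R).prodCongr (Equiv.prodComm u E)).trans
    ((Equiv.prodAssoc R E u).symm.trans (e.prodCongr (Equiv.refl u)))

lemma shuffle_symm_apply {R E R' u : Type} (e : R × E ≃ R') (t : R') (x : u) :
    (shuffle (u := u) e).symm (t, x) = ((e.symm t).1, (x, (e.symm t).2)) := by
  simp [shuffle]

lemma reindex_shuffle_kron {R E R' u : Type} (e : R × E ≃ R')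
    (A : Mat R) (B : Mat u) (C : Mat E) :
    reindexMap (shuffle (u := u) e) (A ⊗ₖ (B ⊗ₖ C))
      = (reindexMap e (A ⊗ₖ C)) ⊗ₖ B := by
  ext ⟨t,x⟩ ⟨t',x'⟩
  simp only [reindexMap_apply, kroneckerMap_apply, shuffle_symm_apply]
  ring

lemma crux {R E R' u v : Type} [Fintype R] [DecidableEq R] [Fintype E] [DecidableEq E]
    [Fintype u] [DecidableEq u] [Fintype R'] [DecidableEq R']
    (K : MatMap u v) (e : R × E ≃ R') :
    reindexMap (shuffle (u := v) e) ∘ₗ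
        tensorMap (LinearMap.id : MatMap R R) (tensorMap K (LinearMap.id : MatMap E E))
      = tensorMap (LinearMap.id : MatMap R' R') K ∘ₗ reindexMap (shuffle (u := u) e) := by
  apply matmap_ext; rintro ⟨s, x, w⟩ ⟨s', x', w'⟩
  simp only [LinearMap.comp_apply, stdBasisMatrix_prod, tensorMap_kron,
    LinearMap.id_apply, reindex_shuffle_kron]

lemma interchange4 {α₁ α₂ β₁ β₂ γ₁ γ₂ δ₁ δ₂ : Type}
    [Fintype α₁] [DecidableEq α₁] [Fintype β₁] [DecidableEq β₁]
    [Fintype γ₁] [DecidableEq γ₁] [Fintype δ₁] [DecidableEq δ₁]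
    (A : MatMap α₁ α₂) (B : MatMap β₁ β₂) (C : MatMap γ₁ γ₂) (D : MatMap δ₁ δ₂) :
    reindexMap (Equiv.prodProdProdComm α₂ β₂ γ₂ δ₂) ∘ₗ
        tensorMap (tensorMap A B) (tensorMap C D) ∘ₗ
        reindexMap (Equiv.prodProdProdComm α₁ γ₁ β₁ δ₁)
      = tensorMap (tensorMap A C) (tensorMap B D) := by
  apply matmap_ext; rintro ⟨⟨a,c⟩,⟨b,d⟩⟩ ⟨⟨a',c'⟩,⟨b',d'⟩⟩
  simp only [LinearMap.comp_apply, stdBasisMatrix_prod, tensorMap_kron, reindex_pppc_kron]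

end Aux2
section Aux3
open Matrix
variable {ι κ ι₁ κ₁ ι₂ κ₂ μ μ₁ μ₂ : Type}

lemma trace_stdBasis [Fintype ι] [DecidableEq ι] (k l : ι) :
    (single k l (1:ℂ)).trace = if k = l then 1 else 0 := by
  simp only [Matrix.trace, Matrix.diag, stdBasis_apply, ite_and]
  rw [Finset.sum_ite_eq]
  simp [eq_comm]

lemma tp_iff_basis [Fintype ι] [DecidableEq ι] [Fintype κ] (L : MatMap ι κ) :
    TracePreserving L ↔
      ∀ k l : ι, (L (single k l 1)).trace = if k = l then 1 else 0 := by
  constructor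
  · intro h k l; rw [h, trace_stdBasis]
  · intro h X
    rw [map_expand L X]
    simp only [Matrix.trace_sum, Matrix.trace_smul, h, smul_eq_mul, mul_ite, mul_one, mul_zero]
    simp [Finset.sum_ite_eq, Matrix.trace]

lemma tensorMap_tp [Fintype ι₁] [DecidableEq ι₁] [Fintype ι₂] [DecidableEq ι₂]
    [Fintype κ₁] [Fintype κ₂] {L₁ : MatMap ι₁ κ₁} {L₂ : MatMap ι₂ κ₂}
    (h₁ : TracePreserving L₁) (h₂ : TracePreserving L₂) :
    TracePreserving (tensorMap L₁ L₂) := by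
  rw [tp_iff_basis]
  rintro ⟨k₁,k₂⟩ ⟨l₁,l₂⟩
  rw [stdBasisMatrix_prod, tensorMap_kron, trace_kronecker, h₁, h₂, trace_stdBasis,
    trace_stdBasis]
  split_ifs with h1 h2 h3 <;> simp_all [Prod.ext_iff]

lemma reindexMap_psd [Fintype ι] [Fintype κ] {e : ι ≃ κ} {X : Mat ι} (h : X.PosSemidef) :
    (reindexMap e X).PosSemidef := h.submatrix e.symm

lemma reindexMap_tp [Fintype ι] [Fintype κ] (e : ι ≃ κ) :
    TracePreserving (reindexMap e) := by
  intro X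
  simp only [Matrix.trace, Matrix.diag, reindexMap_apply]
  exact Equiv.sum_comp e.symm fun j => X j j

lemma cp_comp [Fintype ι] [DecidableEq ι] [Fintype κ] [DecidableEq κ] [Fintype μ]
    {A : MatMap κ μ} {B : MatMap ι κ} (hA : IsCP A) (hB : IsCP B) : IsCP (A ∘ₗ B) := by
  intro r X hX
  have : tensorMap (LinearMap.id : MatMap (Fin r) (Fin r)) (A ∘ₗ B)
      = tensorMap (LinearMap.id : MatMap (Fin r) (Fin r)) A ∘ₗ
        tensorMap (LinearMap.id : MatMap (Fin r) (Fin r)) B := by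
    rw [← tensorMap_comp, LinearMap.comp_id]
  rw [this]
  exact hA r _ (hB r X hX)

lemma reindexMap_cp [Fintype ι] [DecidableEq ι] [Fintype κ] [DecidableEq κ] (e : ι ≃ κ) :
    IsCP (reindexMap e) := by
  intro r X hX
  have : tensorMap (LinearMap.id : MatMap (Fin r) (Fin r)) (reindexMap e)
      = reindexMap ((Equiv.refl (Fin r)).prodCongr e) := by
    rw [← tensorMap_reindex, reindexMap_refl]
  rw [this]
  exact reindexMap_psd hX

lemma reindexMap_channel [Fintype ι] [DecidableEq ι] [Fintype κ] [DecidableEq κ] (e : ι ≃ κ) :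
    IsChannel (reindexMap e) := ⟨reindexMap_cp e, reindexMap_tp e⟩

lemma channel_comp [Fintype ι] [DecidableEq ι] [Fintype κ] [DecidableEq κ] [Fintype μ]
    {A : MatMap κ μ} {B : MatMap ι κ} (hA : IsChannel A) (hB : IsChannel B) :
    IsChannel (A ∘ₗ B) :=
  ⟨cp_comp hA.1 hB.1, fun X => by rw [LinearMap.comp_apply, hA.2, hB.2]⟩

lemma id_channel [Fintype ι] [DecidableEq ι] : IsChannel (LinearMap.id : MatMap ι ι) := by
  constructor
  · intro r X hX
    rwa [tensorMap_id]
  · intro X; rfl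

lemma cp_tensor_id_right {E : Type} [Fintype ι] [DecidableEq ι] [Fintype E] [DecidableEq E]
    [Fintype κ] [DecidableEq κ] {K : MatMap ι κ} (hK : IsCP K) :
    IsCP (tensorMap K (LinearMap.id : MatMap E E)) := by
  intro r X hX
  set e := Fintype.equivFin (Fin r × E) with he
  have h := LinearMap.congr_fun (crux (R := Fin r) K e) X
  simp only [LinearMap.comp_apply] at h
  have h2 : tensorMap (LinearMap.id : MatMap (Fin r) (Fin r))
      (tensorMap K (LinearMap.id : MatMap E E)) X
      = reindexMap (shuffle (u := κ) e).symm
          (tensorMap (LinearMap.id : MatMap (Fin (Fintype.card (Fin r × E)))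
              (Fin (Fintype.card (Fin r × E)))) K
            (reindexMap (shuffle (u := ι) e) X)) := by
    rw [← h, reindexMap_symm_apply]
  rw [h2]
  exact reindexMap_psd (hK _ _ (reindexMap_psd hX))

lemma tensorMap_swap [Fintype ι₁] [DecidableEq ι₁] [Fintype ι₂] [DecidableEq ι₂]
    (L₁ : MatMap ι₁ κ₁) (L₂ : MatMap ι₂ κ₂) :
    tensorMap L₁ L₂ = reindexMap (Equiv.prodComm κ₂ κ₁) ∘ₗ tensorMap L₂ L₁ ∘ₗ
      reindexMap (Equiv.prodComm ι₁ ι₂) := by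
  apply matmap_ext; rintro ⟨k₁,k₂⟩ ⟨l₁,l₂⟩
  simp only [LinearMap.comp_apply, stdBasisMatrix_prod, tensorMap_kron,
    reindex_prodComm_kron]

lemma cp_tensor_id_left {E : Type} [Fintype ι] [DecidableEq ι] [Fintype E] [DecidableEq E]
    [Fintype κ] [DecidableEq κ] {K : MatMap ι κ} (hK : IsCP K) :
    IsCP (tensorMap (LinearMap.id : MatMap E E) K) := by
  rw [tensorMap_swap]
  exact cp_comp (reindexMap_cp _) (cp_comp (cp_tensor_id_right hK) (reindexMap_cp _))

lemma tensorMap_cp [Fintype ι₁] [DecidableEq ι₁] [Fintype ι₂] [DecidableEq ι₂]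
    [Fintype κ₁] [DecidableEq κ₁] [Fintype κ₂] [DecidableEq κ₂]
    {L₁ : MatMap ι₁ κ₁} {L₂ : MatMap ι₂ κ₂} (h₁ : IsCP L₁) (h₂ : IsCP L₂) :
    IsCP (tensorMap L₁ L₂) := by
  have : tensorMap L₁ L₂ = tensorMap (LinearMap.id : MatMap κ₁ κ₁) L₂ ∘ₗ
      tensorMap L₁ (LinearMap.id : MatMap ι₂ ι₂) := by
    rw [← tensorMap_comp, LinearMap.id_comp, LinearMap.comp_id]
  rw [this]
  exact cp_comp (cp_tensor_id_left h₂) (cp_tensor_id_right h₁)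

lemma tensorMap_channel [Fintype ι₁] [DecidableEq ι₁] [Fintype ι₂] [DecidableEq ι₂]
    [Fintype κ₁] [DecidableEq κ₁] [Fintype κ₂] [DecidableEq κ₂]
    {L₁ : MatMap ι₁ κ₁} {L₂ : MatMap ι₂ κ₂} (h₁ : IsChannel L₁) (h₂ : IsChannel L₂) :
    IsChannel (tensorMap L₁ L₂) :=
  ⟨tensorMap_cp h₁.1 h₂.1, tensorMap_tp h₁.2 h₂.2⟩

end Aux3
section Aux4
open Matrix
variable {ι κ : Type} {α : Type}

lemma Rmap_apply [Fintype ι] [DecidableEq κ] (X : Mat ι) :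
    Rmap ι κ X = X.trace • (1 : Mat κ) := rfl

lemma psd_add [Fintype ι] {A B : Mat ι} (hA : A.PosSemidef) (hB : B.PosSemidef) :
    (A + B).PosSemidef := by
  refine ⟨hA.1.add hB.1, fun x => ?_⟩
  simpa [mul_add, add_mul] using add_nonneg (hA.2 x) (hB.2 x)

lemma psd_sum [Fintype ι] {s : Finset α} {f : α → Mat ι}
    (h : ∀ a ∈ s, (f a).PosSemidef) : (∑ a ∈ s, f a).PosSemidef := by
  classical
  induction s using Finset.induction_on with
  | empty => simpa using Matrix.PosSemidef.zero
  | insert _ _ hx ih =>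
      rw [Finset.sum_insert hx]
      exact psd_add (h _ (Finset.mem_insert_self _ _))
        (ih fun a ha => h a (Finset.mem_insert_of_mem ha))

lemma kron_conjTranspose (A : Mat ι) (B : Mat κ) : (A ⊗ₖ B)ᴴ = Aᴴ ⊗ₖ Bᴴ := by
  ext ⟨p,q⟩ ⟨r,s⟩
  simp [conjTranspose_apply, kroneckerMap_apply, star_mul', mul_comm]

lemma psd_kron_one [Fintype ι] [Fintype κ] [DecidableEq κ] {A : Mat ι}
    (hA : A.PosSemidef) : (A ⊗ₖ (1 : Mat κ)).PosSemidef := by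
  exact hA.kronecker Matrix.PosSemidef.one

lemma tensorMap_id_Rmap {S : Type} [Fintype S] [DecidableEq S] [Fintype ι] [DecidableEq ι]
    [Fintype κ] [DecidableEq κ] (X : Mat (S × ι)) :
    tensorMap (LinearMap.id : MatMap S S) (Rmap ι κ) X
      = (Matrix.of fun s t => ∑ j, X (s,j) (t,j)) ⊗ₖ (1 : Mat κ) := by
  ext ⟨s,p⟩ ⟨t,q⟩
  rw [tensorMap_apply]
  simp only [LinearMap.id_apply, Rmap_apply, trace_stdBasis, kroneckerMap_apply, of_apply,
    Matrix.smul_apply, Matrix.one_apply, smul_eq_mul, stdBasis_apply, ite_and, mul_ite,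
    mul_one, mul_zero, ite_mul, zero_mul]
  rw [Finset.sum_eq_single s]
  · rw [Finset.sum_eq_single t]
    · simp only [if_pos rfl]
      by_cases hpq : p = q
      · simp only [hpq, if_pos rfl, if_true]
        rw [Finset.sum_comm]
        refine Finset.sum_congr rfl fun y _ => ?_
        rw [Finset.sum_eq_single y] <;> simp +contextual
      · simp [hpq]
    · intro b _ hb; simp [hb, Ne.symm hb]
    · simp
  · intro b _ hb; simp [hb, Ne.symm hb]
  · simp

lemma Rmap_cp [Fintype ι] [DecidableEq ι] [Fintype κ] [DecidableEq κ] :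
    IsCP (Rmap ι κ) := by
  intro r X hX
  rw [tensorMap_id_Rmap]
  refine psd_kron_one ?_
  have h : (Matrix.of fun s t => ∑ j, X (s,j) (t,j))
      = ∑ j, X.submatrix (fun s => (s,j)) (fun t => (t,j)) := by
    ext s t; simp [Matrix.sum_apply]
  rw [h]
  exact psd_sum fun j _ => hX.submatrix _

lemma state_apply {r : ℕ} [Fintype ι] [DecidableEq ι] [Fintype κ] [DecidableEq κ]
    {C : MatMap ι κ} (hC : IsChannel C) {ρ : Mat (Fin r × ι)} (hρ : IsState ρ) :
    IsState (tensorMap (LinearMap.id : MatMap (Fin r) (Fin r)) C ρ) :=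
  ⟨hC.1 r ρ hρ.1, by rw [tensorMap_tp (fun X => rfl) hC.2 ρ, hρ.2]⟩

lemma reindexMap_state [Fintype ι] [Fintype κ] {e : ι ≃ κ} {ρ : Mat ι} (h : IsState ρ) :
    IsState (reindexMap e ρ) := ⟨reindexMap_psd h.1, by rw [reindexMap_tp e ρ, h.2]⟩

end Aux4
section Aux5
open Matrix

lemma chDiv_superchannel (𝔻 : StateDivergence) {u v w x E : Type}
    [Fintype u] [DecidableEq u] [Fintype v] [DecidableEq v] [Fintype w] [DecidableEq w]
    [Fintype x] [DecidableEq x] [Fintype E] [DecidableEq E]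
    (N M : MatMap u v) (hN : IsChannel N) (hM : IsCP M)
    (P : MatMap (v × E) x) (hP : IsChannel P)
    (Q : MatMap w (u × E)) (hQ : IsChannel Q) :
    chDiv 𝔻 (P ∘ₗ tensorMap N (LinearMap.id : MatMap E E) ∘ₗ Q)
        (P ∘ₗ tensorMap M (LinearMap.id : MatMap E E) ∘ₗ Q)
      ≤ chDiv 𝔻 N M := by
  rw [chDiv]
  refine iSup₂_le fun r ρ => ?_
  set r' := Fintype.card (Fin r × E) with hr'
  set e := Fintype.equivFin (Fin r × E) with he
  set σ : Mat (Fin r' × u) := reindexMap (shuffle (u := u) e)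
    (tensorMap (LinearMap.id : MatMap (Fin r) (Fin r)) Q ρ.1) with hσdef
  have hσ : IsState σ := reindexMap_state (state_apply hQ ρ.2)
  set C : MatMap (Fin r' × v) (Fin r × x) :=
    tensorMap (LinearMap.id : MatMap (Fin r) (Fin r)) P ∘ₗ
      reindexMap (shuffle (u := v) e).symm with hCdef
  have hC : IsChannel C := channel_comp (tensorMap_channel id_channel hP)
    (reindexMap_channel _)
  have key : ∀ K : MatMap u v,
      tensorMap (LinearMap.id : MatMap (Fin r) (Fin r))
          (P ∘ₗ tensorMap K (LinearMap.id : MatMap E E) ∘ₗ Q) ρ.1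
        = C (tensorMap (LinearMap.id : MatMap (Fin r') (Fin r')) K σ) := by
    intro K
    have h1 : tensorMap (LinearMap.id : MatMap (Fin r) (Fin r))
        (P ∘ₗ tensorMap K (LinearMap.id : MatMap E E) ∘ₗ Q)
        = tensorMap (LinearMap.id : MatMap (Fin r) (Fin r)) P ∘ₗ
          (tensorMap (LinearMap.id : MatMap (Fin r) (Fin r))
              (tensorMap K (LinearMap.id : MatMap E E)) ∘ₗ
            tensorMap (LinearMap.id : MatMap (Fin r) (Fin r)) Q) := by
      rw [← tensorMap_comp, ← tensorMap_comp, LinearMap.comp_id, LinearMap.comp_id]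
    have h2 := LinearMap.congr_fun (crux (R := Fin r) K e)
      (tensorMap (LinearMap.id : MatMap (Fin r) (Fin r)) Q ρ.1)
    simp only [LinearMap.comp_apply] at h2
    have h3 : tensorMap (LinearMap.id : MatMap (Fin r) (Fin r))
        (tensorMap K (LinearMap.id : MatMap E E))
        (tensorMap (LinearMap.id : MatMap (Fin r) (Fin r)) Q ρ.1)
        = reindexMap (shuffle (u := v) e).symm
            (tensorMap (LinearMap.id : MatMap (Fin r') (Fin r')) K σ) := by
      rw [hσdef, ← h2, reindexMap_symm_apply]
    rw [h1]
    simp only [LinearMap.comp_apply, hCdef]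
    rw [h3]
  have hτN : IsState (tensorMap (LinearMap.id : MatMap (Fin r') (Fin r')) N σ) :=
    state_apply hN hσ
  have hτM : (tensorMap (LinearMap.id : MatMap (Fin r') (Fin r')) M σ).PosSemidef :=
    hM r' σ hσ.1
  calc 𝔻.D (tensorMap (LinearMap.id : MatMap (Fin r) (Fin r))
          (P ∘ₗ tensorMap N (LinearMap.id : MatMap E E) ∘ₗ Q) ρ.1)
        (tensorMap (LinearMap.id : MatMap (Fin r) (Fin r))
          (P ∘ₗ tensorMap M (LinearMap.id : MatMap E E) ∘ₗ Q) ρ.1)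
      = 𝔻.D (C (tensorMap (LinearMap.id : MatMap (Fin r') (Fin r')) N σ))
          (C (tensorMap (LinearMap.id : MatMap (Fin r') (Fin r')) M σ)) := by
        rw [key N, key M]
    _ ≤ 𝔻.D (tensorMap (LinearMap.id : MatMap (Fin r') (Fin r')) N σ)
          (tensorMap (LinearMap.id : MatMap (Fin r') (Fin r')) M σ) :=
        𝔻.dpi C hC _ _ hτN hτM
    _ ≤ chDiv 𝔻 N M := by
        rw [chDiv]
        exact le_iSup₂_of_le r' ⟨σ, hσ⟩ le_rfl

end Aux5


/-! ### The von Neumann / spectral layer -/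

/-- the generalized conditional entropy is nondecreasing under a local
`R`-preserving superchannel on the nonconditioning side and an arbitrary local
superchannel on the conditioning side. -/
theorem stmt3 (𝔻 : StateDivergence) (a' a b' b c' c d' d e₁ e₂ : ℕ)
    (N : MatMap (Fin a' × Fin b') (Fin a × Fin b)) (hN : IsChannel N)
    (pre₁ : MatMap (Fin c') (Fin a' × Fin e₁)) (hpre₁ : IsChannel pre₁)
    (post₁ : MatMap (Fin a × Fin e₁) (Fin c)) (hpost₁ : IsChannel post₁)
    (hRpres : post₁ ∘ₗ (tensorMap (Rmap (Fin a') (Fin a))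
        (LinearMap.id : MatMap (Fin e₁) (Fin e₁))) ∘ₗ pre₁ = Rmap (Fin c') (Fin c))
    (pre₂ : MatMap (Fin d') (Fin b' × Fin e₂)) (hpre₂ : IsChannel pre₂)
    (post₂ : MatMap (Fin b × Fin e₂) (Fin d)) (hpost₂ : IsChannel post₂) :
    condEnt 𝔻 N
      ≤ condEnt 𝔻 ((tensorMap post₁ post₂)
          ∘ₗ reindexMap (Equiv.prodProdProdComm (Fin a) (Fin b) (Fin e₁) (Fin e₂))
          ∘ₗ (tensorMap N (LinearMap.id : MatMap (Fin e₁ × Fin e₂) (Fin e₁ × Fin e₂)))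
          ∘ₗ reindexMap (Equiv.prodProdProdComm (Fin a') (Fin e₁) (Fin b') (Fin e₂))
          ∘ₗ (tensorMap pre₁ pre₂)) := by
  rw [condEnt, condEnt, EReal.neg_le_neg_iff]
  refine le_iInf fun M => ?_
  have hM' : IsChannel (post₂ ∘ₗ
      tensorMap M.1 (LinearMap.id : MatMap (Fin e₂) (Fin e₂)) ∘ₗ pre₂) :=
    channel_comp hpost₂ (channel_comp (tensorMap_channel M.2 id_channel) hpre₂)
  refine iInf_le_of_le ⟨_, hM'⟩ ?_
  set P : MatMap ((Fin a × Fin b) × (Fin e₁ × Fin e₂)) (Fin c × Fin d) :=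
    tensorMap post₁ post₂ ∘ₗ
      reindexMap (Equiv.prodProdProdComm (Fin a) (Fin b) (Fin e₁) (Fin e₂)) with hPdef
  set Q : MatMap (Fin c' × Fin d') ((Fin a' × Fin b') × (Fin e₁ × Fin e₂)) :=
    reindexMap (Equiv.prodProdProdComm (Fin a') (Fin e₁) (Fin b') (Fin e₂)) ∘ₗ
      tensorMap pre₁ pre₂ with hQdef
  have hP : IsChannel P := channel_comp (tensorMap_channel hpost₁ hpost₂)
    (reindexMap_channel _)
  have hQ : IsChannel Q := channel_comp (reindexMap_channel _)
    (tensorMap_channel hpre₁ hpre₂)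
  have hNeq : (tensorMap post₁ post₂)
      ∘ₗ reindexMap (Equiv.prodProdProdComm (Fin a) (Fin b) (Fin e₁) (Fin e₂))
      ∘ₗ (tensorMap N (LinearMap.id : MatMap (Fin e₁ × Fin e₂) (Fin e₁ × Fin e₂)))
      ∘ₗ reindexMap (Equiv.prodProdProdComm (Fin a') (Fin e₁) (Fin b') (Fin e₂))
      ∘ₗ (tensorMap pre₁ pre₂)
      = P ∘ₗ tensorMap N (LinearMap.id : MatMap (Fin e₁ × Fin e₂) (Fin e₁ × Fin e₂))
          ∘ₗ Q := by
    rw [hPdef, hQdef]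
    simp only [LinearMap.comp_assoc]
  have h4 := interchange4 (Rmap (Fin a') (Fin a)) M.1
    (LinearMap.id : MatMap (Fin e₁) (Fin e₁)) (LinearMap.id : MatMap (Fin e₂) (Fin e₂))
  have hMeq : tensorMap (Rmap (Fin c') (Fin c))
      (post₂ ∘ₗ tensorMap M.1 (LinearMap.id : MatMap (Fin e₂) (Fin e₂)) ∘ₗ pre₂)
      = P ∘ₗ tensorMap (tensorMap (Rmap (Fin a') (Fin a)) M.1)
          (LinearMap.id : MatMap (Fin e₁ × Fin e₂) (Fin e₁ × Fin e₂)) ∘ₗ Q := by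
    rw [show (LinearMap.id : MatMap (Fin e₁ × Fin e₂) (Fin e₁ × Fin e₂))
        = tensorMap (LinearMap.id : MatMap (Fin e₁) (Fin e₁))
            (LinearMap.id : MatMap (Fin e₂) (Fin e₂)) from tensorMap_id.symm]
    rw [← hRpres, tensorMap_comp, tensorMap_comp, ← h4, hPdef, hQdef]
    simp only [LinearMap.comp_assoc]
  rw [hNeq, hMeq]
  exact chDiv_superchannel 𝔻 N (tensorMap (Rmap (Fin a') (Fin a)) M.1) hN
    (tensorMap_cp Rmap_cp M.2.1) P hP Q hQ

end
end QIT
end
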